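/- Let A be a unital C*-algebra and μ a state on A. The standard deviation σ^μ(a) = max(‖a − μ(a)‖_μ, ‖a* − μ(a*)‖_μ) is a Leibniz *-seminorm: σ^μ(a*) = σ^μ(a), σ^μ(1) = 0, and σ^μ(ab) ≤ σ^μ(a)‖b‖ + ‖a‖σ^μ(b). -/

import Mathlib

open scoped ComplexOrder

set_option linter.unusedSectionVars false
set_option maxHeartbeats 1000000

set_option linter.unusedSectionVars false
set_option maxHeartbeats 1000000

section Aux

variable {A : Type*} [NormedRing A] [StarRing A] [CStarRing A]
    [NormedAlgebra ℂ A] [StarModule ℂ A]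

namespace StdDevAux

variable (μ : A →ₗ[ℂ] ℂ)

/-- The seminorm ‖x‖_μ. -/
noncomputable def N (x : A) : ℝ := Real.sqrt (μ (star x * x)).re

lemma N_nonneg (x : A) : 0 ≤ N μ x := Real.sqrt_nonneg _

section WithPos

variable (hpos : ∀ a : A, 0 ≤ μ (star a * a))

include hpos

lemma im_eq (z : A) : (μ (star z * z)).im = 0 :=
  ((Complex.le_def.mp (hpos z)).2).symm

lemma re_nonneg (z : A) : 0 ≤ (μ (star z * z)).re := by
  simpa using (Complex.le_def.mp (hpos z)).1

lemma N_sq (x : A) : (N μ x) ^ 2 = (μ (star x * x)).re :=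
  Real.sq_sqrt (re_nonneg μ hpos x)

/-- Hermitian symmetry from positivity, by polarization. -/
lemma herm (x y : A) : μ (star y * x) = (starRingEnd ℂ) (μ (star x * y)) := by
  have him := im_eq μ hpos
  have h1 : (μ (star x * y)).im + (μ (star y * x)).im = 0 := by
    have h := him (x + y)
    simp only [star_add, add_mul, mul_add, map_add, Complex.add_im, him x, him y] at h
    linarith
  have h2 : (μ (star x * y)).re - (μ (star y * x)).re = 0 := by
    have h := him (x + Complex.I • y)
    simp only [star_add, star_smul, add_mul, mul_add, smul_mul_assoc, mul_smul_comm,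
      smul_smul, map_add, map_smul, Complex.star_def, Complex.conj_I, smul_eq_mul,
      neg_mul, Complex.I_mul_I, neg_neg, one_mul, Complex.add_im, Complex.mul_im,
      Complex.neg_re, Complex.neg_im, Complex.I_re, Complex.I_im, Complex.mul_re,
      him x, him y] at h
    ring_nf at h ⊢
    linarith
  apply Complex.ext
  · simp only [Complex.conj_re]; linarith
  · simp only [Complex.conj_im]; linarith

lemma mu_star (x : A) : μ (star x) = (starRingEnd ℂ) (μ x) := by
  simpa using herm μ hpos 1 x

/-- The positive semidefinite sesquilinear form as a `PreInnerProductSpace.Core`. -/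
noncomputable def core : PreInnerProductSpace.Core ℂ A :=
  { inner := fun x y => μ (star x * y)
    conj_inner_symm := fun x y => by
      show (starRingEnd ℂ) (μ (star y * x)) = μ (star x * y)
      rw [herm μ hpos x y]
      simp
    re_inner_nonneg := fun x => by simpa using (Complex.le_def.mp (hpos x)).1
    add_left := fun x y z => by
      show μ (star (x + y) * z) = μ (star x * z) + μ (star y * z)
      rw [star_add, add_mul, map_add]
    smul_left := fun x y r => by
      show μ (star (r • x) * y) = (starRingEnd ℂ) r * μ (star x * y)
      rw [star_smul, smul_mul_assoc, map_smul, smul_eq_mul, Complex.star_def] }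

/-- Cauchy–Schwarz. -/
lemma cs (x y : A) :
    ‖μ (star x * y)‖ * ‖μ (star x * y)‖ ≤ (μ (star x * x)).re * (μ (star y * y)).re := by
  letI c : PreInnerProductSpace.Core ℂ A := core μ hpos
  have h0 := InnerProductSpace.Core.inner_mul_inner_self_le (𝕜 := ℂ) (F := A) x y
  rw [InnerProductSpace.Core.norm_inner_symm (𝕜 := ℂ) (F := A) y x] at h0
  exact h0

lemma norm_mu_le_N_mul_N (x y : A) : ‖μ (star x * y)‖ ≤ N μ x * N μ y := by
  calc ‖μ (star x * y)‖ = Real.sqrt (‖μ (star x * y)‖ * ‖μ (star x * y)‖) := by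
        rw [Real.sqrt_mul_self (norm_nonneg _)]
    _ ≤ Real.sqrt ((μ (star x * x)).re * (μ (star y * y)).re) :=
        Real.sqrt_le_sqrt (cs μ hpos x y)
    _ = N μ x * N μ y := by rw [Real.sqrt_mul (re_nonneg μ hpos x)]; rfl

/-- Triangle inequality for the seminorm. -/
lemma N_add (x y : A) : N μ (x + y) ≤ N μ x + N μ y := by
  have hre : (μ (star x * y)).re ≤ N μ x * N μ y :=
    le_trans (Complex.re_le_norm _) (by
      exact norm_mu_le_N_mul_N μ hpos x y)
  have expand : (μ (star (x + y) * (x + y))).re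
      = (μ (star x * x)).re + 2 * (μ (star x * y)).re + (μ (star y * y)).re := by
    rw [star_add, add_mul, mul_add, mul_add, map_add, map_add, map_add]
    rw [herm μ hpos x y]
    simp only [Complex.add_re, Complex.conj_re]
    ring
  have hb : (μ (star (x + y) * (x + y))).re ≤ (N μ x + N μ y) ^ 2 := by
    have ex := N_sq μ hpos x
    have ey := N_sq μ hpos y
    rw [expand]
    nlinarith [N_nonneg μ x, N_nonneg μ y]
  calc N μ (x + y) = Real.sqrt ((μ (star (x + y) * (x + y))).re) := rfl
    _ ≤ Real.sqrt ((N μ x + N μ y) ^ 2) := Real.sqrt_le_sqrt hb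
    _ = N μ x + N μ y := Real.sqrt_sq (by
        have := N_nonneg μ x; have := N_nonneg μ y; linarith)

end WithPos

lemma N_smul (c : ℂ) (x : A) : N μ (c • x) = ‖c‖ * N μ x := by
  have h : star (c • x) * (c • x) = (starRingEnd ℂ c * c) • (star x * x) := by
    rw [star_smul, smul_mul_assoc, mul_smul_comm, smul_smul, Complex.star_def]
  unfold N
  rw [h, map_smul, smul_eq_mul]
  have h2 : (starRingEnd ℂ) c * c = ((Complex.normSq c : ℝ) : ℂ) :=
    (Complex.normSq_eq_conj_mul_self).symm
  rw [h2]
  rw [show (((Complex.normSq c : ℝ) : ℂ) * μ (star x * x)).re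
      = Complex.normSq c * (μ (star x * x)).re by
    simp [Complex.mul_re]]
  rw [Real.sqrt_mul (Complex.normSq_nonneg c)]
  have hn : Real.sqrt (Complex.normSq c) = ‖c‖ := by
    rw [Complex.norm_def]
  rw [hn]

section Complete

variable [CompleteSpace A] (hpos : ∀ a : A, 0 ≤ μ (star a * a)) (hone : μ 1 = 1)

include hpos hone

/-- conjugation bound via CFC square root. -/
lemma conj_le (a x : A) :
    (μ (star x * (star a * a) * x)).re ≤ ‖a‖ ^ 2 * (μ (star x * x)).re := by
  letI : CStarAlgebra A := { }
  haveI : Nontrivial A := by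
    refine nontrivial_of_ne 1 0 fun h => ?_
    rw [h, map_zero] at hone
    exact one_ne_zero hone.symm
  set p := star a * a with hp_def
  have hp : IsSelfAdjoint p := IsSelfAdjoint.star_mul_self a
  have hspec : ∀ r ∈ spectrum ℝ p, r ≤ ‖a‖ ^ 2 := by
    intro r hr
    have h1 : ‖r‖ ≤ ‖p‖ := spectrum.norm_le_norm_of_mem hr
    have h2 : ‖p‖ = ‖a‖ ^ 2 := by rw [hp_def, CStarRing.norm_star_mul_self]; ring
    calc r ≤ |r| := le_abs_self r
      _ = ‖r‖ := (Real.norm_eq_abs r).symm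
      _ ≤ ‖p‖ := h1
      _ = ‖a‖ ^ 2 := h2
  set s := cfc (fun r : ℝ => Real.sqrt (‖a‖ ^ 2 - r)) p with hs_def
  have hs : IsSelfAdjoint s := cfc_predicate _ p
  have hss : s * s = algebraMap ℝ A (‖a‖ ^ 2) - p := by
    rw [hs_def, ← cfc_mul _ _ p]
    have heq : cfc (fun r : ℝ => Real.sqrt (‖a‖ ^ 2 - r) * Real.sqrt (‖a‖ ^ 2 - r)) p
        = cfc (fun r : ℝ => ‖a‖ ^ 2 - r) p := by
      apply cfc_congr
      intro r hr
      exact Real.mul_self_sqrt (by linarith [hspec r hr])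
    rw [heq, cfc_sub _ _ p, cfc_const _ p, cfc_id' ℝ p]
  have key : star (s * x) * (s * x) = (‖a‖ ^ 2 : ℝ) • (star x * x) - star x * p * x := by
    rw [star_mul, hs.star_eq]
    calc star x * s * (s * x) = star x * (s * s) * x := by noncomm_ring
      _ = star x * (algebraMap ℝ A (‖a‖ ^ 2) - p) * x := by rw [hss]
      _ = _ := by
        rw [Algebra.algebraMap_eq_smul_one]
        rw [mul_sub, sub_mul, mul_smul_comm, mul_one, smul_mul_assoc]
  have h0 := hpos (s * x)
  rw [key] at h0
  have hsm : (‖a‖ ^ 2 : ℝ) • (star x * x) = ((‖a‖ ^ 2 : ℝ) : ℂ) • (star x * x) := by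
    rw [← smul_one_smul ℂ (‖a‖ ^ 2 : ℝ) (star x * x)]
    congr 1
    simp [Complex.real_smul]
  rw [hsm, map_sub, map_smul, smul_eq_mul] at h0
  have h1 := (Complex.le_def.mp h0).1
  simp only [Complex.zero_re, Complex.sub_re, Complex.mul_re, Complex.ofReal_re,
    Complex.ofReal_im, zero_mul, sub_zero] at h1
  linarith

lemma N_mul_le (a x : A) : N μ (a * x) ≤ ‖a‖ * N μ x := by
  have h : star (a * x) * (a * x) = star x * (star a * a) * x := by
    rw [star_mul]; noncomm_ring
  unfold N
  rw [h]
  calc Real.sqrt ((μ (star x * (star a * a) * x)).re)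
      ≤ Real.sqrt (‖a‖ ^ 2 * (μ (star x * x)).re) :=
        Real.sqrt_le_sqrt (conj_le μ hpos hone a x)
    _ = ‖a‖ * Real.sqrt ((μ (star x * x)).re) := by
        rw [Real.sqrt_mul (sq_nonneg _), Real.sqrt_sq (norm_nonneg _)]

end Complete

section WithOne

variable [CompleteSpace A] (hpos : ∀ a : A, 0 ≤ μ (star a * a)) (hone : μ 1 = 1)

include hpos hone

lemma norm_mu_le_N (x : A) : ‖μ x‖ ≤ N μ x := by
  have h := cs μ hpos 1 x
  simp only [star_one, one_mul, mul_one, hone, Complex.one_re, one_mul] at h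
  calc ‖μ x‖ = Real.sqrt (‖μ x‖ * ‖μ x‖) := (Real.sqrt_mul_self (norm_nonneg _)).symm
    _ ≤ N μ x := Real.sqrt_le_sqrt h

lemma N_one : N μ (1 : A) = 1 := by
  unfold N
  simp [hone]

lemma N_le_norm (x : A) : N μ x ≤ ‖x‖ := by
  have h := N_mul_le μ hpos hone x 1
  rw [mul_one, N_one μ hpos hone, mul_one] at h
  exact h

lemma norm_mu_le (x : A) : ‖μ x‖ ≤ ‖x‖ :=
  le_trans (norm_mu_le_N μ hpos hone x) (N_le_norm μ hpos hone x)

lemma center_center (x : A) (c : ℂ) :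
    (x - c • 1) - μ (x - c • 1) • 1 = x - μ x • 1 := by
  have h : μ (x - c • 1) = μ x - c := by
    rw [map_sub, map_smul, hone, smul_eq_mul, mul_one]
  rw [h, sub_smul]
  abel

lemma N_center_le (y : A) : N μ (y - μ y • 1) ≤ N μ y := by
  have expand : star (y - μ y • 1) * (y - μ y • 1)
      = star y * y - (starRingEnd ℂ (μ y)) • y - (μ y) • star y
        + (μ y * (starRingEnd ℂ (μ y))) • (1 : A) := by
    simp only [star_sub, star_smul, star_one, sub_mul, mul_sub, smul_sub, smul_mul_assoc,
      mul_smul_comm, smul_smul, mul_one, one_mul, Complex.star_def]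
    abel
  have hmu : (μ (star (y - μ y • 1) * (y - μ y • 1))).re
      = (μ (star y * y)).re - ‖μ y‖ ^ 2 := by
    rw [expand]
    rw [map_add, map_sub, map_sub, map_smul, map_smul, map_smul, hone,
      mu_star μ hpos y, smul_eq_mul, smul_eq_mul, smul_eq_mul, mul_one]
    have h1 : (starRingEnd ℂ) (μ y) * μ y = ((Complex.normSq (μ y) : ℝ) : ℂ) :=
      (Complex.normSq_eq_conj_mul_self).symm
    have h2 : μ y * (starRingEnd ℂ) (μ y) = ((Complex.normSq (μ y) : ℝ) : ℂ) := by
      rw [mul_comm]; exact h1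
    rw [h2]
    rw [Complex.sq_norm]
    simp only [Complex.sub_re, Complex.add_re, Complex.ofReal_re]
    rw [h1]
    simp
  have h2 : (N μ (y - μ y • 1)) ^ 2 ≤ (N μ y) ^ 2 := by
    rw [N_sq μ hpos, N_sq μ hpos, hmu]
    nlinarith [norm_nonneg (μ y)]
  calc N μ (y - μ y • 1) = Real.sqrt ((N μ (y - μ y • 1)) ^ 2) :=
        (Real.sqrt_sq (N_nonneg μ _)).symm
    _ ≤ Real.sqrt ((N μ y) ^ 2) := Real.sqrt_le_sqrt h2
    _ = N μ y := Real.sqrt_sq (N_nonneg μ _)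

/-- The deviation seminorm D x = ‖x − μ(x)1‖_μ is minimal among ‖x − c1‖_μ. -/
lemma D_le_sub (x : A) (c : ℂ) : N μ (x - μ x • 1) ≤ N μ (x - c • 1) := by
  rw [← center_center μ hpos hone x c]
  exact N_center_le μ hpos hone _

lemma D_leibniz (a b : A) :
    N μ (a * b - μ (a * b) • 1) ≤ ‖a‖ * N μ (b - μ b • 1) + ‖b‖ * N μ (a - μ a • 1) := by
  have key : a * b - (μ a * μ b) • (1 : A)
      = a * (b - μ b • 1) + μ b • (a - μ a • 1) := by
    rw [mul_sub, smul_sub, smul_smul, mul_smul_comm, mul_one, mul_comm (μ b) (μ a)]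
    abel
  calc N μ (a * b - μ (a * b) • 1) ≤ N μ (a * b - (μ a * μ b) • 1) :=
        D_le_sub μ hpos hone _ _
    _ = N μ (a * (b - μ b • 1) + μ b • (a - μ a • 1)) := by rw [key]
    _ ≤ N μ (a * (b - μ b • 1)) + N μ (μ b • (a - μ a • 1)) := N_add μ hpos _ _
    _ ≤ ‖a‖ * N μ (b - μ b • 1) + ‖μ b‖ * N μ (a - μ a • 1) := by
        refine add_le_add (N_mul_le μ hpos hone _ _) (le_of_eq ?_)
        exact N_smul μ _ _
    _ ≤ ‖a‖ * N μ (b - μ b • 1) + ‖b‖ * N μ (a - μ a • 1) := by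
        have := norm_mu_le μ hpos hone b
        have h0 := N_nonneg μ (a - μ a • 1)
        nlinarith

end WithOne

end StdDevAux

end Aux

/-- The standard deviation σ^μ(a) = max(‖a − μ(a)1‖_μ, ‖a* − conj(μ(a))1‖_μ) with
respect to a state μ on a unital C*-algebra, where ‖c‖_μ = μ(c*c)^{1/2}. -/
noncomputable def stdDev {A : Type*} [NormedRing A] [StarRing A] [CStarRing A]
    [NormedAlgebra ℂ A] [StarModule ℂ A] (μ : A →ₗ[ℂ] ℂ) (a : A) : ℝ :=
  max (Real.sqrt (μ (star (a - μ a • 1) * (a - μ a • 1))).re)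
    (Real.sqrt (μ (star (star a - (starRingEnd ℂ) (μ a) • 1) *
      (star a - (starRingEnd ℂ) (μ a) • 1))).re)

/-- For a state μ on a unital C*-algebra, the standard deviation σ^μ is a Leibniz
*-seminorm: σ^μ(a*) = σ^μ(a), σ^μ(1) = 0, and σ^μ(ab) ≤ σ^μ(a)‖b‖ + ‖a‖σ^μ(b). -/
theorem stdDev_leibniz_star_seminorm {A : Type*} [NormedRing A] [StarRing A]
    [CStarRing A] [NormedAlgebra ℂ A] [StarModule ℂ A] [CompleteSpace A]
    (μ : A →ₗ[ℂ] ℂ) (hpos : ∀ a : A, 0 ≤ μ (star a * a)) (hone : μ 1 = 1) :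
    (∀ a : A, stdDev μ (star a) = stdDev μ a) ∧
      stdDev μ (1 : A) = 0 ∧
      ∀ a b : A, stdDev μ (a * b) ≤ stdDev μ a * ‖b‖ + ‖a‖ * stdDev μ b := by
  have hD1 : ∀ a : A, stdDev μ a
      = max (StdDevAux.N μ (a - μ a • 1)) (StdDevAux.N μ (star a - μ (star a) • 1)) := by
    intro a
    unfold stdDev StdDevAux.N
    rw [StdDevAux.mu_star μ hpos a]
  refine ⟨?_, ?_, ?_⟩
  · intro a
    rw [hD1, hD1, star_star, max_comm]
  · rw [hD1]
    have h0 : (1 : A) - μ 1 • 1 = 0 := by rw [hone, one_smul, sub_self]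
    rw [star_one, h0]
    simp [StdDevAux.N]
  · intro a b
    rw [hD1, hD1, hD1]
    have hab1 := StdDevAux.D_leibniz μ hpos hone a b
    have hab2 : StdDevAux.N μ (star (a * b) - μ (star (a * b)) • 1)
        ≤ ‖b‖ * StdDevAux.N μ (star a - μ (star a) • 1) + ‖a‖ * StdDevAux.N μ (star b - μ (star b) • 1) := by
      rw [star_mul]
      have h := StdDevAux.D_leibniz μ hpos hone (star b) (star a)
      simpa [norm_star] using h
    apply max_le
    · refine le_trans hab1 ?_
      calc ‖a‖ * StdDevAux.N μ (b - μ b • 1) + ‖b‖ * StdDevAux.N μ (a - μ a • 1)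
          ≤ ‖a‖ * max (StdDevAux.N μ (b - μ b • 1)) (StdDevAux.N μ (star b - μ (star b) • 1))
            + ‖b‖ * max (StdDevAux.N μ (a - μ a • 1)) (StdDevAux.N μ (star a - μ (star a) • 1)) :=
            add_le_add (mul_le_mul_of_nonneg_left (le_max_left _ _) (norm_nonneg a))
              (mul_le_mul_of_nonneg_left (le_max_left _ _) (norm_nonneg b))
        _ = max (StdDevAux.N μ (a - μ a • 1)) (StdDevAux.N μ (star a - μ (star a) • 1)) * ‖b‖
            + ‖a‖ * max (StdDevAux.N μ (b - μ b • 1)) (StdDevAux.N μ (star b - μ (star b) • 1)) := by ring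
    · refine le_trans hab2 ?_
      calc ‖b‖ * StdDevAux.N μ (star a - μ (star a) • 1) + ‖a‖ * StdDevAux.N μ (star b - μ (star b) • 1)
          ≤ ‖b‖ * max (StdDevAux.N μ (a - μ a • 1)) (StdDevAux.N μ (star a - μ (star a) • 1))
            + ‖a‖ * max (StdDevAux.N μ (b - μ b • 1)) (StdDevAux.N μ (star b - μ (star b) • 1)) :=
            add_le_add (mul_le_mul_of_nonneg_left (le_max_right _ _) (norm_nonneg b))
              (mul_le_mul_of_nonneg_left (le_max_right _ _) (norm_nonneg a))
        _ = max (StdDevAux.N μ (a - μ a • 1)) (StdDevAux.N μ (star a - μ (star a) • 1)) * ‖b‖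
            + ‖a‖ * max (StdDevAux.N μ (b - μ b • 1)) (StdDevAux.N μ (star b - μ (star b) • 1)) := by ring
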